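/- Let γ : [0, t] → ℤ be a path (piecewise-constant with unit jumps) in the time interval [0,t] with at most βt jumps, where β > 0 and t ≥ 16. Define a time interval [s−√t, s) ⊆ [0, t/2] to be favorable for γ if for every u ∈ [s−√t, s), the number of jumps of γ during [u, s) is at most 4β|s−u|. Then there exist at least √t/4 − 1 pairwise disjoint favorable intervals for γ contained in [0, t/2]. -/

import Mathlib

open scoped Classical

private lemma favorable_aux (t β : ℝ) (ht : 16 ≤ t) (hβ : 0 < β) (J : Finset ℝ) :
    ∀ fuel : ℕ, ∀ s : ℝ, 0 ≤ s →
    (J.filter (fun x => x < s)).card + ⌊s / Real.sqrt t⌋₊ ≤ fuel →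
    ∃ S : Finset ℝ,
      (∀ s' ∈ S, 0 ≤ s' - Real.sqrt t ∧ s' ≤ s ∧
        ∀ u ∈ Set.Ico (s' - Real.sqrt t) s',
          ((J.filter (fun x => u ≤ x ∧ x < s')).card : ℝ) ≤ 4 * β * (s' - u)) ∧
      (∀ a ∈ S, ∀ b ∈ S, a ≠ b →
        Disjoint (Set.Ico (a - Real.sqrt t) a) (Set.Ico (b - Real.sqrt t) b)) ∧
      s ≤ Real.sqrt t * (S.card + 1) +
        ((J.filter (fun x => x < s)).card : ℝ) / (4 * β) := by
  have hst : (0:ℝ) < Real.sqrt t := Real.sqrt_pos.mpr (by linarith)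
  intro fuel
  induction fuel with
  | zero =>
      intro s hs hfuel
      refine ⟨∅, by simp, by simp, ?_⟩
      have h1 : ⌊s / Real.sqrt t⌋₊ = 0 := by omega
      have h2 : s / Real.sqrt t < 1 := by
        by_contra h
        push_neg at h
        have := Nat.floor_pos.mpr h
        omega
      have hslt : s < Real.sqrt t := (div_lt_one hst).mp h2
      have hc : (0:ℝ) ≤ ((J.filter (fun x => x < s)).card : ℝ) / (4*β) := by positivity
      simp only [Finset.card_empty, Nat.cast_zero]
      linarith
  | succ n ih =>
      intro s hs hfuel
      by_cases hsmall : s < Real.sqrt t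
      · refine ⟨∅, by simp, by simp, ?_⟩
        have hc : (0:ℝ) ≤ ((J.filter (fun x => x < s)).card : ℝ) / (4*β) := by positivity
        simp only [Finset.card_empty, Nat.cast_zero]
        linarith
      push_neg at hsmall
      by_cases hfav : ∀ u ∈ Set.Ico (s - Real.sqrt t) s,
          ((J.filter (fun x => u ≤ x ∧ x < s)).card : ℝ) ≤ 4 * β * (s - u)
      · -- favorable step : recurse at s - √t
        have h1 : (1:ℝ) ≤ s / Real.sqrt t := (le_div_iff₀ hst).mpr (by linarith)
        have hfl1 : 1 ≤ ⌊s / Real.sqrt t⌋₊ := Nat.le_floor (by exact_mod_cast h1)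
        have hfloor : ⌊(s - Real.sqrt t) / Real.sqrt t⌋₊ = ⌊s / Real.sqrt t⌋₊ - 1 := by
          have heq : (s - Real.sqrt t) / Real.sqrt t = s / Real.sqrt t - (1:ℕ) := by
            push_cast
            field_simp
          rw [heq]
          have h0 : (0:ℝ) ≤ s / Real.sqrt t - (1:ℕ) := by push_cast; linarith
          have := Nat.floor_add_natCast h0 1
          rw [sub_add_cancel] at this
          omega
        have hmono : (J.filter (fun x => x < s - Real.sqrt t)).card
            ≤ (J.filter (fun x => x < s)).card := by
          apply Finset.card_le_card
          intro y hy
          simp only [Finset.mem_filter] at hy ⊢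
          exact ⟨hy.1, by linarith [hy.2]⟩
        obtain ⟨S, hS1, hS2, hS3⟩ := ih (s - Real.sqrt t) (by linarith) (by
          rw [hfloor]; omega)
        have hnotmem : s ∉ S := fun h => by
          have := (hS1 s h).2.1
          linarith
        refine ⟨insert s S, ?_, ?_, ?_⟩
        · intro s' hs'
          rcases Finset.mem_insert.mp hs' with rfl | h
          · exact ⟨by linarith, le_refl _, hfav⟩
          · obtain ⟨h1', h2', h3'⟩ := hS1 s' h
            exact ⟨h1', by linarith, h3'⟩
        · intro a ha b hb hab
          rcases Finset.mem_insert.mp ha with rfl | ha' <;>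
            rcases Finset.mem_insert.mp hb with rfl | hb'
          · exact absurd rfl hab
          · have hb2 := (hS1 b hb').2.1
            rw [Set.disjoint_left]
            intro x hx1 hx2
            have := hx2.2
            have := hx1.1
            linarith [hx2.1]
          · have ha2 := (hS1 a ha').2.1
            rw [Set.disjoint_left]
            intro x hx1 hx2
            have := hx1.2
            have := hx2.1
            linarith [hx1.1]
          · exact hS2 a ha' b hb' hab
        · rw [Finset.card_insert_of_notMem hnotmem]
          have hm : ((J.filter (fun x => x < s - Real.sqrt t)).card : ℝ)
              ≤ ((J.filter (fun x => x < s)).card : ℝ) := by exact_mod_cast hmono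
          have hdiv : ((J.filter (fun x => x < s - Real.sqrt t)).card : ℝ) / (4*β)
              ≤ ((J.filter (fun x => x < s)).card : ℝ) / (4*β) := by gcongr
          push_cast
          push_cast at hS3
          linarith
      · -- unfavorable step : skip to the witness u
        push_neg at hfav
        obtain ⟨u, hu, hcnt⟩ := hfav
        have hu0 : 0 ≤ u := by
          have := hu.1
          linarith
        have hus : u < s := hu.2
        have hpos : (0:ℝ) < ((J.filter (fun x => u ≤ x ∧ x < s)).card : ℝ) :=
          lt_of_le_of_lt (by nlinarith [hu.1, hu.2, hu0]) hcnt
        have hne : (J.filter (fun x => u ≤ x ∧ x < s)).Nonempty := by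
          rw [← Finset.card_pos]
          exact_mod_cast hpos
        obtain ⟨x, hx⟩ := hne
        simp only [Finset.mem_filter] at hx
        have hsub : J.filter (fun x => x < u) ⊆ J.filter (fun x => x < s) := by
          intro y hy
          simp only [Finset.mem_filter] at hy ⊢
          exact ⟨hy.1, lt_trans hy.2 hus⟩
        have hcardlt : (J.filter (fun x => x < u)).card < (J.filter (fun x => x < s)).card := by
          apply Finset.card_lt_card
          rw [Finset.ssubset_iff_of_subset hsub]
          refine ⟨x, Finset.mem_filter.mpr ⟨hx.1, hx.2.2⟩, ?_⟩
          simp only [Finset.mem_filter, not_and, not_lt]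
          exact fun _ => hx.2.1
        have hflmono : ⌊u / Real.sqrt t⌋₊ ≤ ⌊s / Real.sqrt t⌋₊ :=
          Nat.floor_le_floor (by gcongr)
        obtain ⟨S, hS1, hS2, hS3⟩ := ih u hu0 (by omega)
        have hdisj : Disjoint (J.filter (fun x => x < u))
            (J.filter (fun x => u ≤ x ∧ x < s)) := by
          rw [Finset.disjoint_left]
          intro a ha hb
          simp only [Finset.mem_filter] at ha hb
          linarith [ha.2, hb.2.1]
        have hun : J.filter (fun x => x < u) ∪ J.filter (fun x => u ≤ x ∧ x < s)
            = J.filter (fun x => x < s) := by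
          ext a
          simp only [Finset.mem_union, Finset.mem_filter]
          constructor
          · rintro (⟨h1, h2⟩ | ⟨h1, h2⟩)
            exacts [⟨h1, lt_trans h2 hus⟩, ⟨h1, h2.2⟩]
          · rintro ⟨h1, h2⟩
            by_cases h : a < u
            · exact Or.inl ⟨h1, h⟩
            · exact Or.inr ⟨h1, le_of_not_gt h, h2⟩
        have hsplit := (Finset.card_union_of_disjoint hdisj).symm
        rw [hun] at hsplit
        refine ⟨S, ?_, hS2, ?_⟩
        · intro s' hs'
          obtain ⟨h1', h2', h3'⟩ := hS1 s' hs'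
          exact ⟨h1', h2'.trans hus.le, h3'⟩
        · have h4β : (0:ℝ) < 4*β := by linarith
          have hstep : s - u < ((J.filter (fun x => u ≤ x ∧ x < s)).card : ℝ) / (4*β) := by
            rw [lt_div_iff₀ h4β]
            linarith [hcnt]
          have hc : ((J.filter (fun x => x < s)).card : ℝ)
              = ((J.filter (fun x => x < u)).card : ℝ)
                + ((J.filter (fun x => u ≤ x ∧ x < s)).card : ℝ) := by
            exact_mod_cast hsplit.symm
          rw [hc, add_div]
          linarith

/-- A path `γ : ℝ → ℤ` on the time interval `[0,t]` with jump-time set `J ⊆ [0,t]`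
(the discontinuity points of `γ` in `[0,t]`), having at most `β t` jumps, admits at
least `√t/4 − 1` pairwise disjoint favorable intervals `[s − √t, s) ⊆ [0, t/2]`,
where `[s − √t, s)` is favorable if for every `u ∈ [s − √t, s)` the number of jumps
of `γ` in `[u, s)` is at most `4 β (s − u)`. -/
theorem favorable_intervals_of_path
    (t β : ℝ) (ht : 16 ≤ t) (hβ : 0 < β)
    (γ : ℝ → ℤ) (J : Finset ℝ)
    (hJsub : (J : Set ℝ) ⊆ Set.Icc 0 t)
    (hJjump : ∀ x ∈ Set.Icc (0:ℝ) t, x ∈ J ↔ ¬ ContinuousAt γ x)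
    (hJcard : (J.card : ℝ) ≤ β * t) :
    ∃ S : Finset ℝ,
      Real.sqrt t / 4 - 1 ≤ (S.card : ℝ) ∧
      (∀ s ∈ S, 0 ≤ s - Real.sqrt t ∧ s ≤ t / 2 ∧
        ∀ u ∈ Set.Ico (s - Real.sqrt t) s,
          ((J.filter (fun x => u ≤ x ∧ x < s)).card : ℝ) ≤ 4 * β * (s - u)) ∧
      (∀ s ∈ S, ∀ s' ∈ S, s ≠ s' →
        Disjoint (Set.Ico (s - Real.sqrt t) s) (Set.Ico (s' - Real.sqrt t) s')) := by
  have hst : (0:ℝ) < Real.sqrt t := Real.sqrt_pos.mpr (by linarith)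
  obtain ⟨S, hS1, hS2, hS3⟩ := favorable_aux t β ht hβ J
    ((J.filter (fun x => x < t/2)).card + ⌊(t/2) / Real.sqrt t⌋₊) (t/2)
    (by linarith) le_rfl
  refine ⟨S, ?_, fun s hs => ⟨(hS1 s hs).1, (hS1 s hs).2.1, (hS1 s hs).2.2⟩, hS2⟩
  -- card bound
  have hfc : ((J.filter (fun x => x < t/2)).card : ℝ) ≤ (J.card : ℝ) := by
    exact_mod_cast Finset.card_le_card (Finset.filter_subset _ _)
  have h4β : (0:ℝ) < 4*β := by linarith
  have hdiv : ((J.filter (fun x => x < t/2)).card : ℝ) / (4*β) ≤ t/4 := by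
    rw [div_le_iff₀ h4β]
    nlinarith
  have hkey : Real.sqrt t * (Real.sqrt t / 4) ≤ Real.sqrt t * ((S.card : ℝ) + 1) := by
    have hss : Real.sqrt t * Real.sqrt t = t := Real.mul_self_sqrt (by linarith)
    nlinarith
  have := (mul_le_mul_iff_right₀ hst).mp hkey
  linarith
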